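/- There exists a torsion-free abelian group that is Bassian-finite but not relatively co-Hopfian (and in particular not co-Hopfian). In fact, if α is a p-adic integer transcendental over ℚ and G is the p-pure closure of the subring ℤ[α] in the p-adic integers (G = {β in the p-adic integers : p^j β ∈ ℤ[α] for some j}), then G is indecomposable (hence Bassian-finite) but multiplication by α is an injective endomorphism of G whose image is not essential in G. -/

import Mathlib

open Polynomial

/-- An abelian group `G` is *Bassian-finite* if there is no injective homomorphism
from `G` into a proper direct summand of `G`. -/
def BassianFinite (G : Type*) [AddCommGroup G] : Prop :=
  ∀ A B : AddSubgroup G, IsCompl A B → B ≠ ⊥ → ∀ φ : G →+ A, ¬ Function.Injective φ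

/-- An abelian group `G` is *relatively co-Hopfian* if the image of every injective
endomorphism of `G` is an essential subgroup of `G`. -/
def RelativelyCoHopfian (G : Type*) [AddCommGroup G] : Prop :=
  ∀ φ : G →+ G, Function.Injective φ → ∀ B : AddSubgroup G, B ≠ ⊥ → φ.range ⊓ B ≠ ⊥

/-- An abelian group `G` is *co-Hopfian* if every injective endomorphism of `G`
is surjective. -/
def CoHopfian (G : Type*) [AddCommGroup G] : Prop :=
  ∀ φ : G →+ G, Function.Injective φ → Function.Surjective φ

/-- An abelian group is *indecomposable* if in any internal direct sum decomposition
`G = A ⊕ B`, one of the summands is zero. -/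
def IndecomposableAddGroup (G : Type*) [AddCommGroup G] : Prop :=
  ∀ A B : AddSubgroup G, IsCompl A B → A = ⊥ ∨ B = ⊥

/-- The `p`-pure closure of the subring `ℤ[α]` inside the `p`-adic integers:
`{β : ℤ_[p] | p ^ j * β ∈ ℤ[α] for some j ∈ ℕ}`, as an additive subgroup. -/
def padicPureClosure (p : ℕ) [Fact p.Prime] (α : ℤ_[p]) : AddSubgroup ℤ_[p] where
  carrier := {β : ℤ_[p] | ∃ j : ℕ, (p : ℤ_[p]) ^ j * β ∈ Algebra.adjoin ℤ ({α} : Set ℤ_[p])}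
  zero_mem' := ⟨0, by simpa using Subalgebra.zero_mem _⟩
  add_mem' := by
    rintro a b ⟨j, hj⟩ ⟨k, hk⟩
    refine ⟨j + k, ?_⟩
    have h1 : (p : ℤ_[p]) ^ (j + k) * (a + b) =
        (p : ℤ_[p]) ^ k * ((p : ℤ_[p]) ^ j * a) + (p : ℤ_[p]) ^ j * ((p : ℤ_[p]) ^ k * b) := by
      ring
    rw [h1]
    exact add_mem (mul_mem (pow_mem (natCast_mem _ p) k) hj)
      (mul_mem (pow_mem (natCast_mem _ p) j) hk)
  neg_mem' := by
    rintro a ⟨j, hj⟩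
    exact ⟨j, by simpa [mul_neg] using neg_mem hj⟩

section Aux

variable (p : ℕ) [Fact p.Prime] (α : ℤ_[p])

lemma PPC.mem_iff (β : ℤ_[p]) : β ∈ padicPureClosure p α ↔
    ∃ j : ℕ, (p : ℤ_[p]) ^ j * β ∈ Algebra.adjoin ℤ ({α} : Set ℤ_[p]) := Iff.rfl

lemma PPC.one_mem : (1 : ℤ_[p]) ∈ padicPureClosure p α :=
  ⟨0, by simpa using Subalgebra.one_mem _⟩

lemma PPC.natCast_mem (a : ℕ) : (a : ℤ_[p]) ∈ padicPureClosure p α :=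
  ⟨0, by simpa using Subalgebra.natCast_mem _ a⟩

lemma PPC.pure (n : ℕ) (y : ℤ_[p]) (h : (p : ℤ_[p]) ^ n * y ∈ padicPureClosure p α) :
    y ∈ padicPureClosure p α := by
  obtain ⟨j, hj⟩ := h
  exact ⟨j + n, by rw [pow_add, mul_assoc]; exact hj⟩

/-- Any additive homomorphism from the pure closure into `ℤ_[p]` is multiplication
by its value at `1`. -/
lemma PPC.key (φ : (padicPureClosure p α) →+ ℤ_[p]) (x : padicPureClosure p α) :
    φ x = (x : ℤ_[p]) * φ ⟨1, PPC.one_mem p α⟩ := by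
  set c := φ ⟨1, PPC.one_mem p α⟩ with hc
  have main : ∀ n : ℕ, ‖φ x - (x : ℤ_[p]) * c‖ ≤ (p : ℝ) ^ (-(n : ℤ)) := by
    intro n
    obtain ⟨w, hw⟩ := Ideal.mem_span_singleton.mp (PadicInt.appr_spec n (x : ℤ_[p]))
    set a : ℕ := (x : ℤ_[p]).appr n with ha'
    have ha : ((a : ℕ) : ℤ_[p]) ∈ padicPureClosure p α := PPC.natCast_mem p α a
    have hwG : w ∈ padicPureClosure p α := by
      refine PPC.pure p α n w ?_
      rw [← hw]
      exact sub_mem x.2 ha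
    have hxval : (x : ℤ_[p]) = (a : ℤ_[p]) + (p : ℤ_[p]) ^ n * w := by
      rw [← hw]; ring
    have hxeq : x = ((a : ℕ) • (⟨1, PPC.one_mem p α⟩ : padicPureClosure p α)) +
        (p ^ n : ℕ) • (⟨w, hwG⟩ : padicPureClosure p α) := by
      ext
      push_cast
      simpa using hxval
    have h1 : φ x = (a : ℤ_[p]) * c + ((p : ℤ_[p]) ^ n) * φ ⟨w, hwG⟩ := by
      rw [hxeq, map_add, map_nsmul, map_nsmul, nsmul_eq_mul, nsmul_eq_mul]
      push_cast
      ring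
    have h2 : φ x - (x : ℤ_[p]) * c = (p : ℤ_[p]) ^ n * (φ ⟨w, hwG⟩ - w * c) := by
      rw [h1, hxval]; ring
    rw [h2]
    calc ‖(p : ℤ_[p]) ^ n * (φ ⟨w, hwG⟩ - w * c)‖
        = ‖(p : ℤ_[p]) ^ n‖ * ‖φ ⟨w, hwG⟩ - w * c‖ := by
          simp [norm_mul]
      _ ≤ ‖(p : ℤ_[p]) ^ n‖ * 1 := by
          gcongr
          exact PadicInt.norm_le_one _
      _ = (p : ℝ) ^ (-(n : ℤ)) := by rw [mul_one, PadicInt.norm_p_pow]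
  have hp1 : (1 : ℝ) < (p : ℝ) := by exact_mod_cast (Fact.out : p.Prime).one_lt
  have htend : Filter.Tendsto (fun n : ℕ => (p : ℝ) ^ (-(n : ℤ))) Filter.atTop (nhds 0) := by
    simp_rw [zpow_neg, zpow_natCast, ← inv_pow]
    exact tendsto_pow_atTop_nhds_zero_of_lt_one (by positivity)
      (inv_lt_one_of_one_lt₀ hp1)
  have hle : ‖φ x - (x : ℤ_[p]) * c‖ ≤ 0 := ge_of_tendsto' htend main
  have h0 := le_antisymm hle (norm_nonneg _)
  rw [norm_eq_zero, sub_eq_zero] at h0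
  exact h0

/-- Multiplication by `α` as an endomorphism of the pure closure. -/
noncomputable def PPC.mulHom : (padicPureClosure p α) →+ (padicPureClosure p α) where
  toFun x := ⟨α * (x : ℤ_[p]), by
    obtain ⟨j, hj⟩ := x.2
    refine ⟨j, ?_⟩
    rw [show (p : ℤ_[p]) ^ j * (α * (x : ℤ_[p])) = α * ((p : ℤ_[p]) ^ j * (x : ℤ_[p])) by ring]
    exact mul_mem (Algebra.self_mem_adjoin_singleton ℤ α) hj⟩
  map_zero' := by ext; simp
  map_add' a b := by ext; simp [mul_add]

@[simp] lemma PPC.mulHom_apply (x : padicPureClosure p α) :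
    ((PPC.mulHom p α x : padicPureClosure p α) : ℤ_[p]) = α * (x : ℤ_[p]) := rfl

end Aux

theorem padicPureClosure_bassianFinite_not_relativelyCoHopfian
    (p : ℕ) [Fact p.Prime] (α : ℤ_[p]) (hα : Transcendental ℤ α) :
    (∀ g : padicPureClosure p α, g ≠ 0 → ¬IsOfFinAddOrder g) ∧
    IndecomposableAddGroup (padicPureClosure p α) ∧
    BassianFinite (padicPureClosure p α) ∧
    ¬ RelativelyCoHopfian (padicPureClosure p α) ∧
    ¬ CoHopfian (padicPureClosure p α) ∧
    ∃ φ : (padicPureClosure p α : Type) →+ (padicPureClosure p α : Type),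
      (∀ x : padicPureClosure p α, (φ x : ℤ_[p]) = α * (x : ℤ_[p])) ∧
      Function.Injective φ ∧
      ∃ B : AddSubgroup (padicPureClosure p α), B ≠ ⊥ ∧ φ.range ⊓ B = ⊥ := by
  have hp : p.Prime := Fact.out
  set G := padicPureClosure p α with hG
  have honeG : (1 : ℤ_[p]) ∈ G := PPC.one_mem p α
  set oneG : G := ⟨1, honeG⟩ with honeG'
  have hone_ne : oneG ≠ 0 := by
    intro h
    have : (1 : ℤ_[p]) = 0 := congrArg Subtype.val h
    exact one_ne_zero this
  -- α ≠ 0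
  have hα0 : α ≠ 0 := by
    intro h
    exact hα (h ▸ isAlgebraic_zero)
  -- torsion-free
  have htf : ∀ g : G, g ≠ 0 → ¬IsOfFinAddOrder g := by
    intro g hg hfin
    obtain ⟨n, hn, hng⟩ := (isOfFinAddOrder_iff_nsmul_eq_zero).mp hfin
    apply hg
    have : (n : ℤ_[p]) * (g : ℤ_[p]) = 0 := by
      have := congrArg Subtype.val hng
      simpa [nsmul_eq_mul] using this
    rcases mul_eq_zero.mp this with h | h
    · exact absurd h (Nat.cast_ne_zero.mpr hn.ne')
    · exact Subtype.ext h
  -- indecomposable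
  have hindec : IndecomposableAddGroup G := by
    intro A B hcompl
    have hcompl' : IsCompl (AddSubgroup.toIntSubmodule A) (AddSubgroup.toIntSubmodule B) :=
      (OrderIso.isCompl_iff _).mp hcompl
    set π := Submodule.linearProjOfIsCompl _ _ hcompl' with hπ
    -- e : G →+ ℤ_[p], x ↦ val of projection of x onto A
    set ψ : G →+ ℤ_[p] := (AddSubgroup.subtype G).comp
      ((AddSubgroup.toIntSubmodule A).subtype.toAddMonoidHom.comp π.toAddMonoidHom) with hψ
    have hψval : ∀ x : G, ψ x = ((π x : AddSubgroup.toIntSubmodule A) : G) := fun x => rfl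
    have hkey : ∀ x : G, ψ x = (x : ℤ_[p]) * ψ oneG := fun x => PPC.key p α ψ x
    set c : ℤ_[p] := ψ oneG with hcdef
    -- idempotency: c * c = c
    have hidem : c * c = c := by
      have h4 := Submodule.linearProjOfIsCompl_apply_left hcompl' (π oneG)
      have h1 : ψ (((π oneG : AddSubgroup.toIntSubmodule A)) : ↥G) = ψ oneG := by
        rw [hψval oneG, hψval]
        exact congrArg (fun u : (AddSubgroup.toIntSubmodule A) => ((u : ↥G) : ℤ_[p])) h4
      have h2 := hkey (((π oneG : AddSubgroup.toIntSubmodule A)) : ↥G)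
      rw [h1] at h2
      have h3 : ((((π oneG : AddSubgroup.toIntSubmodule A)) : ↥G) : ℤ_[p]) = c := by
        rw [← hψval oneG]
      rw [h3] at h2
      exact h2.symm
    have hc01 : c = 0 ∨ c = 1 := by
      rcases mul_eq_zero.mp (show c * (c - 1) = 0 by rw [mul_sub, hidem]; ring) with h | h
      · exact Or.inl h
      · exact Or.inr (sub_eq_zero.mp h)
    rcases hc01 with h | h
    · -- A = ⊥
      left
      rw [eq_bot_iff]
      intro a ha
      have haA : a ∈ AddSubgroup.toIntSubmodule A := ha
      have h4 := Submodule.linearProjOfIsCompl_apply_left hcompl'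
        (⟨a, haA⟩ : AddSubgroup.toIntSubmodule A)
      have h5 : ψ a = (a : ℤ_[p]) := by
        rw [hψval]
        exact congrArg (fun u : (AddSubgroup.toIntSubmodule A) => ((u : ↥G) : ℤ_[p])) h4
      rw [hkey, h, mul_zero] at h5
      exact AddSubgroup.mem_bot.mpr (Subtype.ext h5.symm)
    · -- B = ⊥
      right
      rw [eq_bot_iff]
      intro b hb
      have hbB : b ∈ AddSubgroup.toIntSubmodule B := hb
      have h4 := Submodule.linearProjOfIsCompl_apply_right hcompl'
        (⟨b, hbB⟩ : AddSubgroup.toIntSubmodule B)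
      have h1 : ψ b = 0 := by
        rw [hψval]
        rw [show π b = 0 from h4]
        rfl
      rw [hkey, h, mul_one] at h1
      exact AddSubgroup.mem_bot.mpr (Subtype.ext h1)
  -- Bassian-finite
  have hbass : BassianFinite G := by
    intro A B hcompl hB φ hφ
    rcases hindec A B hcompl with h | h
    · subst h
      have h0 : φ oneG = 0 := Subtype.ext (AddSubgroup.mem_bot.mp (φ oneG).2)
      exact hone_ne (hφ (by rw [h0, map_zero]))
    · exact hB h
  -- multiplication by α
  set Φ := PPC.mulHom p α with hΦ
  have hΦval : ∀ x : G, ((Φ x : G) : ℤ_[p]) = α * (x : ℤ_[p]) := fun x => rfl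
  have hΦinj : Function.Injective Φ := by
    intro x y hxy
    have : α * (x : ℤ_[p]) = α * (y : ℤ_[p]) := by
      rw [← hΦval, ← hΦval, hxy]
    exact Subtype.ext (mul_left_cancel₀ hα0 this)
  set B := AddSubgroup.zmultiples oneG with hBdef
  have hBne : B ≠ ⊥ := by
    intro h
    apply hone_ne
    have : oneG ∈ B := AddSubgroup.mem_zmultiples oneG
    rwa [h, AddSubgroup.mem_bot] at this
  have hinf : Φ.range ⊓ B = ⊥ := by
    rw [eq_bot_iff]
    rintro g ⟨⟨x, hx⟩, hgB⟩
    obtain ⟨n, hn⟩ := AddSubgroup.mem_zmultiples_iff.mp hgB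
    -- α * x = n in ℤ_[p]
    have hmain : α * (x : ℤ_[p]) = (n : ℤ_[p]) := by
      have h1 : ((g : G) : ℤ_[p]) = α * (x : ℤ_[p]) := by rw [← hx]; rfl
      have h2 : ((g : G) : ℤ_[p]) = (n : ℤ_[p]) := by
        rw [← hn]
        push_cast [zsmul_eq_mul]
        simp [honeG']
      rw [← h1, h2]
    obtain ⟨j, hj⟩ := x.2
    rw [Algebra.adjoin_singleton_eq_range_aeval] at hj
    obtain ⟨P, hP0⟩ := hj
    have hP : (aeval α) P = (p : ℤ_[p]) ^ j * (x : ℤ_[p]) := hP0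
    have haev : (aeval α) (X * P) = (aeval α) (C ((p : ℤ) ^ j * n)) := by
      rw [aeval_mul, aeval_X, aeval_C, hP,
        show α * ((p : ℤ_[p]) ^ j * (x : ℤ_[p])) = (p : ℤ_[p]) ^ j * (α * (x : ℤ_[p])) from by
          ring,
        hmain]
      simp only [eq_intCast]
      push_cast
      ring
    have hpoly : X * P = C ((p : ℤ) ^ j * n) :=
      (transcendental_iff_injective.mp hα) haev
    have hcoeff : (0 : ℤ) = (p : ℤ) ^ j * n := by
      have := congrArg (fun q : ℤ[X] => q.coeff 0) hpoly
      simpa only [Polynomial.mul_coeff_zero, Polynomial.coeff_X_zero, Polynomial.coeff_C,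
        zero_mul, eq_self_iff_true, if_true] using this
    have hn0 : n = 0 := by
      rcases mul_eq_zero.mp hcoeff.symm with h | h
      · exact absurd h (pow_ne_zero j (by exact_mod_cast hp.ne_zero))
      · exact h
    have : g = 0 := by rw [← hn, hn0, zero_zsmul]
    simp [this]
  have hnotrel : ¬ RelativelyCoHopfian G := by
    intro h
    exact h Φ hΦinj B hBne hinf
  have hnotco : ¬ CoHopfian G := by
    intro h
    obtain ⟨x, hx⟩ := h Φ hΦinj oneG
    apply hone_ne
    have : oneG ∈ Φ.range ⊓ B := ⟨⟨x, hx⟩, AddSubgroup.mem_zmultiples oneG⟩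
    rwa [hinf, AddSubgroup.mem_bot] at this
  exact ⟨htf, hindec, hbass, hnotrel, hnotco, Φ, hΦval, hΦinj, B, hBne, hinf⟩
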